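/- arXiv:1703.04516 — 5 statements merged into one kernel-verified Lean document; each statement's English description precedes it below -/
import Mathlib

section
/- Let A be a Grothendieck abelian category and B a localizing subcategory satisfying (Inj): every injective object of B remains injective in A. Then for every object M of B and every i > 0, the i-th right derived functor of the torsion functor Γ satisfies R^iΓ(M) = 0. -/
/-!
STATEMENT 1. Let `A` be a Grothendieck abelian category and `B` a localizing
subcategory satisfying (Inj): every injective object of `B` remains injective
in `A`.  Then for every object `M` of `B` and every `i > 0`, the `i`-th right
derived functor of the torsion functor `Γ` satisfies `R^iΓ(M) = 0`.

Encoding: the localizing subcategory `B` is the kernel of an exact localization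
functor `T : A ⥤ Q` with fully faithful right adjoint (section functor) `S`.
The torsion functor `Γ` (maximal subobject lying in `B`) is characterized by
the predicate `IsTorsionFunctor`.
-/

open CategoryTheory Limits

universe v u u'

variable {A : Type u} [Category.{v} A] [Abelian A]
variable {Q : Type u'} [Category.{v} Q] [Abelian Q]

/-- Membership in the localizing subcategory `B`, realized as the kernel of the
localization functor `T`. -/
def memB (T : A ⥤ Q) (N : A) : Prop := IsZero (T.obj N)

/-- `Γ` (together with the natural inclusion `ε : Γ ⟶ 𝟭 A`) is the torsion
functor with respect to the localizing subcategory `B = ker T`:  `Γ M` is the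
maximal subobject of `M` belonging to `B`. -/
structure IsTorsionFunctor (T : A ⥤ Q) (Γ : A ⥤ A) (ε : Γ ⟶ 𝟭 A) : Prop where
  mem : ∀ M : A, memB T (Γ.obj M)
  mono : ∀ M : A, Mono (ε.app M)
  isMax : ∀ (M N : A) (f : N ⟶ M), Mono f → memB T N →
    ∃ g : N ⟶ Γ.obj M, g ≫ ε.app M = f

set_option linter.unusedSectionVars false

section Aux

variable (T : A ⥤ Q)

lemma memB_of_mono [PreservesFiniteLimits T] {X Y : A} (f : X ⟶ Y) [Mono f]
    (hY : memB T Y) : memB T X :=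
  IsZero.of_mono (T.map f) hY

lemma memB_of_epi {S : Q ⥤ A} (adj : T ⊣ S) {X Y : A} (f : X ⟶ Y) [Epi f]
    (hX : memB T X) : memB T Y := by
  have : T.IsLeftAdjoint := adj.isLeftAdjoint
  exact IsZero.of_epi (T.map f) hX

/-- monos in the full subcategory `B` are monos in `A`. -/
lemma mono_of_memB_mono [PreservesFiniteLimits T] {X Y : ObjectProperty.FullSubcategory (memB T)}
    (f : X ⟶ Y) [Mono f] : Mono ((ObjectProperty.ι (memB T)).map f) := by
  set f' : X.obj ⟶ Y.obj := (ObjectProperty.ι (memB T)).map f with hf'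
  apply Abelian.mono_of_kernel_ι_eq_zero
  have hk : memB T (kernel f') := memB_of_mono T (kernel.ι _) X.property
  let K : ObjectProperty.FullSubcategory (memB T) := ⟨kernel f', hk⟩
  have h : (ObjectProperty.homMk (kernel.ι f') : K ⟶ X) ≫ f = (ObjectProperty.homMk (0 : K.obj ⟶ X.obj) : K ⟶ X) ≫ f := by
    apply ObjectProperty.hom_ext
    show kernel.ι f' ≫ f' = (0 : K.obj ⟶ X.obj) ≫ f'
    simp
  have h2 := (cancel_mono f).mp h
  exact congrArg (fun g => g.hom) h2

lemma isIso_ε {Γ : A ⥤ A} {ε : Γ ⟶ 𝟭 A} (hΓ : IsTorsionFunctor T Γ ε)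
    {N : A} (hN : memB T N) : IsIso (ε.app N) := by
  obtain ⟨g, hg⟩ := hΓ.isMax N N (𝟙 N) inferInstance hN
  have := hΓ.mono N
  refine ⟨g, ?_, hg⟩
  rw [← cancel_mono (ε.app N)]
  simp [hg]

/-- the B-version of `Injective.under`. -/
lemma bEnvelope {S : Q ⥤ A} (adj : T ⊣ S) [PreservesFiniteLimits T]
    [EnoughInjectives A]
    (hInj : ∀ I : ObjectProperty.FullSubcategory (memB T), Injective I → Injective I.obj)
    {Γ : A ⥤ A} {ε : Γ ⟶ 𝟭 A} (hΓ : IsTorsionFunctor T Γ ε)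
    (X : A) (hX : memB T X) :
    ∃ (J : A) (j : X ⟶ J), Mono j ∧ Injective J ∧ memB T J := by
  have hmono := hΓ.mono
  set E := Injective.under X
  obtain ⟨g, hg⟩ := hΓ.isMax E X (Injective.ι X) inferInstance hX
  refine ⟨Γ.obj E, g, ?_, ?_, hΓ.mem E⟩
  · have : Mono (g ≫ ε.app E) := hg ▸ inferInstance
    exact mono_of_mono g (ε.app E)
  · apply hInj ⟨Γ.obj E, hΓ.mem E⟩
    constructor
    intro P R gP fP hfP
    have hfP' : Mono ((ObjectProperty.ι (memB T)).map fP) := mono_of_memB_mono T fP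
    -- extend gP ≫ ε through fP using injectivity of E
    obtain ⟨h0, hh0⟩ := (Injective.injective_under X).factors
      (((ObjectProperty.ι (memB T)).map gP) ≫ ε.app E)
      ((ObjectProperty.ι (memB T)).map fP)
    -- factor h0 through Γ E via its image
    have him : memB T (image h0) := memB_of_epi T adj (factorThruImage h0) R.property
    obtain ⟨q, hq⟩ := hΓ.isMax E (image h0) (image.ι h0) inferInstance him
    refine ⟨ObjectProperty.homMk (factorThruImage h0 ≫ q : R.obj ⟶ Γ.obj E), ?_⟩
    apply ObjectProperty.hom_ext
    show ((ObjectProperty.ι (memB T)).map fP) ≫ factorThruImage h0 ≫ q =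
      (ObjectProperty.ι (memB T)).map gP
    rw [← cancel_mono (ε.app E)]
    simp only [Category.assoc, hq, image.fac, hh0]

end Aux

section Construction

variable (T : A ⥤ Q)

/-- One step of the B-injective resolution. -/
structure BStep (T : A ⥤ Q) where
  X : A
  J : A
  f : @Quiver.Hom A Category.toCategoryStruct.toQuiver X J
  mono : Mono f
  memX : memB T X
  memJ : memB T J
  inj : Injective J

variable (env : ∀ X : A, memB T X → ∃ (J : A) (j : X ⟶ J), Mono j ∧ Injective J ∧ memB T J)
variable (hcoker : ∀ {X Y : A} (f : X ⟶ Y), memB T Y → memB T (cokernel f))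

/-- first step -/
noncomputable def bStepOf (X : A) (hX : memB T X) : BStep T :=
  ⟨X, (env X hX).choose, (env X hX).choose_spec.choose,
    (env X hX).choose_spec.choose_spec.1,
    hX,
    (env X hX).choose_spec.choose_spec.2.2,
    (env X hX).choose_spec.choose_spec.2.1⟩

/-- next step -/
noncomputable def bNext (s : BStep T) : BStep T :=
  bStepOf T env (cokernel s.f) (hcoker s.f s.memJ)

noncomputable def bRes (M : A) (hM : memB T M) : ℕ → BStep T
  | 0 => bStepOf T env M hM
  | n + 1 => bNext T env hcoker (bRes M hM n)

lemma bRes_succ_X (M : A) (hM : memB T M) (n : ℕ) :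
    (bRes T env hcoker M hM (n + 1)).X = cokernel (bRes T env hcoker M hM n).f := rfl

/-- differential -/
noncomputable def bd (M : A) (hM : memB T M) (n : ℕ) :
    (bRes T env hcoker M hM n).J ⟶ (bRes T env hcoker M hM (n + 1)).J :=
  cokernel.π (bRes T env hcoker M hM n).f ≫ (bRes T env hcoker M hM (n + 1)).f

lemma bd_squared (M : A) (hM : memB T M) (n : ℕ) :
    bd T env hcoker M hM n ≫ bd T env hcoker M hM (n + 1) = 0 := by
  dsimp [bd]
  erw [Category.assoc, cokernel.condition_assoc, zero_comp, comp_zero]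

/-- copy of `CategoryTheory.exact_f_d` with arbitrary mono out of the cokernel. -/
lemma exact_f_d' {X Y Z : A} (f : X ⟶ Y) (g : cokernel f ⟶ Z) [Mono g] :
    (ShortComplex.mk f (cokernel.π f ≫ g)
      (by rw [cokernel.condition_assoc, zero_comp])).Exact := by
  let α : ShortComplex.mk f (cokernel.π f) (by simp) ⟶
      ShortComplex.mk f (cokernel.π f ≫ g) (by rw [cokernel.condition_assoc, zero_comp]) :=
    { τ₁ := 𝟙 _
      τ₂ := 𝟙 _
      τ₃ := g }
  have : Epi α.τ₁ := by dsimp [α]; infer_instance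
  have : IsIso α.τ₂ := by dsimp [α]; infer_instance
  have : Mono α.τ₃ := by dsimp [α]; infer_instance
  rw [← ShortComplex.exact_iff_of_epi_of_isIso_of_mono α]
  apply ShortComplex.exact_of_g_is_cokernel
  apply cokernelIsCokernel

lemma bd_exact_zero (M : A) (hM : memB T M) :
    (ShortComplex.mk (bRes T env hcoker M hM 0).f (bd T env hcoker M hM 0)
      (by dsimp [bd]; erw [cokernel.condition_assoc, zero_comp])).Exact := by
  have := (bRes T env hcoker M hM 1).mono
  exact @exact_f_d' _ _ _ _ _ _ _ _ this

lemma bd_exact_succ (M : A) (hM : memB T M) (n : ℕ) :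
    (ShortComplex.mk (bd T env hcoker M hM n) (bd T env hcoker M hM (n + 1))
      (bd_squared T env hcoker M hM n)).Exact := by
  have := (bRes T env hcoker M hM (n + 1)).mono
  have := (bRes T env hcoker M hM (n + 2)).mono
  let α : ShortComplex.mk (bd T env hcoker M hM n) (bd T env hcoker M hM (n + 1))
        (bd_squared T env hcoker M hM n) ⟶
      ShortComplex.mk (bRes T env hcoker M hM (n + 1)).f (bd T env hcoker M hM (n + 1))
        (by dsimp [bd]; erw [cokernel.condition_assoc, zero_comp]) :=
    { τ₁ := cokernel.π (bRes T env hcoker M hM n).f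
      τ₂ := 𝟙 _
      τ₃ := 𝟙 _
      comm₁₂ := by dsimp [bd]; simp; rfl
      comm₂₃ := by dsimp; simp }
  have : Epi α.τ₁ := by dsimp [α]; exact (inferInstance : Epi (cokernel.π (bRes T env hcoker M hM n).f))
  have : IsIso α.τ₂ := by dsimp [α]; infer_instance
  have : Mono α.τ₃ := by dsimp [α]; infer_instance
  rw [ShortComplex.exact_iff_of_epi_of_isIso_of_mono α]
  exact @exact_f_d' _ _ _ _ _ _ _ _ (bRes T env hcoker M hM (n + 2)).mono

/-- the cochain complex of the B-injective resolution -/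
noncomputable def bCocomplex (M : A) (hM : memB T M) : CochainComplex A ℕ :=
  CochainComplex.of (fun n => (bRes T env hcoker M hM n).J) (bd T env hcoker M hM)
    (bd_squared T env hcoker M hM)

lemma bCocomplex_exactAt_succ (M : A) (hM : memB T M) (n : ℕ) :
    (bCocomplex T env hcoker M hM).ExactAt (n + 1) := by
  rw [HomologicalComplex.exactAt_iff' _ n (n + 1) (n + 1 + 1) (by simp)
    (by simp)]
  have h1 : (bCocomplex T env hcoker M hM).d n (n + 1) = bd T env hcoker M hM n :=
    CochainComplex.of_d (fun n => (bRes T env hcoker M hM n).J) (bd T env hcoker M hM) n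
  have h2 : (bCocomplex T env hcoker M hM).d (n + 1) (n + 1 + 1) =
      bd T env hcoker M hM (n + 1) := CochainComplex.of_d (fun n => (bRes T env hcoker M hM n).J) (bd T env hcoker M hM) (n + 1)
  have e : (ShortComplex.mk (bd T env hcoker M hM n) (bd T env hcoker M hM (n + 1))
        (bd_squared T env hcoker M hM n)) ≅
      HomologicalComplex.sc' (bCocomplex T env hcoker M hM) n (n + 1) (n + 1 + 1) := by
    refine ShortComplex.isoMk (Iso.refl _) (Iso.refl _) (Iso.refl _) ?_ ?_
    · dsimp [HomologicalComplex.sc', HomologicalComplex.shortComplexFunctor']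
      simp only [h1, Category.id_comp, Category.comp_id]
      exact (Category.id_comp _).trans (Category.comp_id _).symm
    · dsimp [HomologicalComplex.sc', HomologicalComplex.shortComplexFunctor']
      simp only [h2, Category.id_comp, Category.comp_id]
      exact (Category.id_comp _).trans (Category.comp_id _).symm
  exact (ShortComplex.exact_iff_of_iso e).mp (bd_exact_succ T env hcoker M hM n)

omit env hcoker in
lemma exists_bResolution [EnoughInjectives A]
    (env : ∀ X : A, memB T X → ∃ (J : A) (j : X ⟶ J), Mono j ∧ Injective J ∧ memB T J)
    (hcoker : ∀ {X Y : A} (f : X ⟶ Y), memB T Y → memB T (cokernel f))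
    (M : A) (hM : memB T M) :
    ∃ I : InjectiveResolution M, ∀ n, memB T (I.cocomplex.X n) := by
  have hd01 : (bCocomplex T env hcoker M hM).d 0 1 = bd T env hcoker M hM 0 :=
    CochainComplex.of_d (fun n => (bRes T env hcoker M hM n).J) (bd T env hcoker M hM) 0
  refine ⟨⟨bCocomplex T env hcoker M hM, fun n => (bRes T env hcoker M hM n).inj, ?_, ?_⟩,
    fun n => (bRes T env hcoker M hM n).memJ⟩
  · exact (CochainComplex.fromSingle₀Equiv _ _).symm
      ⟨(bRes T env hcoker M hM 0).f, by
        rw [hd01]; dsimp [bd]; erw [cokernel.condition_assoc, zero_comp]⟩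
  · refine ⟨fun n => ?_⟩
    cases n with
    | zero =>
      rw [CochainComplex.quasiIsoAt₀_iff, ShortComplex.quasiIso_iff_of_zeros]
      · have := (bRes T env hcoker M hM 0).mono
        refine (ShortComplex.exact_and_mono_f_iff_of_iso ?_).2
          ⟨bd_exact_zero T env hcoker M hM, by
            exact (bRes T env hcoker M hM 0).mono⟩
        refine ShortComplex.isoMk (Iso.refl _) (Iso.refl _) (Iso.refl _) ?_ ?_
        · dsimp
          exact (Category.id_comp _).trans ((CochainComplex.fromSingle₀Equiv_symm_apply_f_zero (C := bCocomplex T env hcoker M hM) (X := M) (bRes T env hcoker M hM 0).f _).symm.trans (Category.comp_id _).symm)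
        · dsimp
          exact (Category.id_comp _).trans (hd01.symm.trans (Category.comp_id _).symm)
      all_goals rfl
    | succ n =>
      rw [quasiIsoAt_iff_exactAt]
      · apply bCocomplex_exactAt_succ
      · apply CochainComplex.exactAt_succ_single_obj

end Construction

theorem statement1
    -- `A` is Grothendieck abelian (in particular it has enough injectives):
    [HasColimits A] [AB5 A] [HasSeparator A] [EnoughInjectives A]
    -- the localization functor `T` and the section functor `S`:
    (T : A ⥤ Q) (S : Q ⥤ A) (adj : T ⊣ S)
    [T.Additive] [PreservesFiniteLimits T] [IsIso adj.counit]
    -- property (Inj): injective objects of `B` remain injective in `A`: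
    (hInj : ∀ I : ObjectProperty.FullSubcategory (memB T), Injective I → Injective I.obj)
    -- the torsion functor `Γ`:
    (Γ : A ⥤ A) (ε : Γ ⟶ 𝟭 A) [Γ.Additive] (hΓ : IsTorsionFunctor T Γ ε)
    -- an object of `B`:
    (M : A) (hM : memB T M)
    (i : ℕ) (hi : 0 < i) :
    IsZero ((Γ.rightDerived i).obj M) := by
  obtain ⟨I, hI⟩ := exists_bResolution T
    (fun X hX => bEnvelope T adj hInj hΓ X hX)
    (fun {X Y} f hY => memB_of_epi T adj (cokernel.π f) hY) M hM
  refine IsZero.of_iso ?_ (I.isoRightDerivedObj Γ i)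
  -- iso between Γ applied to the resolution and the resolution itself
  let φ : (Γ.mapHomologicalComplex (ComplexShape.up ℕ)).obj I.cocomplex ⟶ I.cocomplex :=
    { f := fun n => ε.app (I.cocomplex.X n)
      comm' := fun p q _ => (ε.naturality (I.cocomplex.d p q)).symm }
  have : ∀ n : ℕ, IsIso (φ.f n) := fun n => isIso_ε T hΓ (hI n)
  have : IsIso φ := HomologicalComplex.Hom.isIso_of_components φ
  obtain ⟨n, rfl⟩ : ∃ n, i = n + 1 := ⟨i - 1, (Nat.succ_pred_eq_of_pos hi).symm⟩
  have hz : IsZero (I.cocomplex.homology (n + 1)) :=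
    (HomologicalComplex.exactAt_iff_isZero_homology _ _).1 (I.cocomplex_exactAt_succ n)
  exact IsZero.of_iso hz
    ((HomologicalComplex.homologyFunctor A (ComplexShape.up ℕ) (n + 1)).mapIso (asIso φ))
end

section
/- Let A be a Grothendieck abelian category and B a localizing subcategory satisfying (Inj). If I is an injective object of A, then there is a short exact sequence 0 → Γ(I) → I → Σ(I) → 0 in which the first map is the inclusion of the maximal B-subobject and the second is the unit of saturation; moreover Γ(I) and Σ(I) are injective objects of A, and T(I) is an injective object of A/B. -/
/-!
STATEMENT 2. Let `A` be a Grothendieck abelian category and `B` a localizing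
subcategory satisfying (Inj).  If `I` is an injective object of `A`, then there
is a short exact sequence `0 → Γ(I) → I → Σ(I) → 0`, the first map being the
inclusion of the maximal `B`-subobject and the second the unit of saturation;
moreover `Γ(I)` and `Σ(I)` are injective objects of `A`, and `T(I)` is an
injective object of `A/B`.

Encoding: `B` is the kernel of an exact localization functor `T : A ⥤ Q` with
fully faithful right adjoint (section functor) `S`; the saturation is
`Σ = S ∘ T` with unit `adj.unit`, and the torsion functor `Γ` is characterized
by `IsTorsionFunctor`.
-/

open CategoryTheory Limits

universe v u u'

variable {A : Type u} [Category.{v} A] [Abelian A]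
variable {Q : Type u'} [Category.{v} Q] [Abelian Q]

section Aux

variable {T : A ⥤ Q} {S : Q ⥤ A}

/-- Every morphism from an object of `B` to an object in the image of `S` is zero. -/
lemma hom_to_S_eq_zero (adj : T ⊣ S) {N : A} {Y : Q} (hN : memB T N) (f : N ⟶ S.obj Y) :
    f = 0 := by
  have h : (adj.homEquiv N Y).symm f = (adj.homEquiv N Y).symm 0 :=
    IsZero.eq_of_src hN _ _
  have := congrArg (adj.homEquiv N Y) h
  simpa using this

/-- `B` is closed under subobjects. -/
lemma memB_of_mono_s2 (T : A ⥤ Q) [T.PreservesMonomorphisms] {N M : A} (f : N ⟶ M) [Mono f]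
    (hM : memB T M) : memB T N :=
  IsZero.of_mono (T.map f) hM

/-- `B` is closed under quotients. -/
lemma memB_of_epi_s2 (T : A ⥤ Q) [T.PreservesEpimorphisms] {N M : A} (f : N ⟶ M) [Epi f]
    (hN : memB T N) : memB T M :=
  IsZero.of_epi (T.map f) hN

/-- Any morphism (not necessarily a mono) from an object of `B` factors through `Γ`. -/
lemma factor_thru_torsion (T : A ⥤ Q) [T.PreservesMonomorphisms] [T.PreservesEpimorphisms]
    {Γ : A ⥤ A} {ε : Γ ⟶ 𝟭 A} (hΓ : IsTorsionFunctor T Γ ε) {N M : A} (f : N ⟶ M)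
    (hN : memB T N) : ∃ g : N ⟶ Γ.obj M, g ≫ ε.app M = f := by
  have him : memB T (Abelian.image f) :=
    memB_of_epi_s2 T (Abelian.factorThruImage f) hN
  obtain ⟨g, hg⟩ := hΓ.isMax M (Abelian.image f) (Abelian.image.ι f) inferInstance him
  refine ⟨Abelian.factorThruImage f ≫ g, ?_⟩
  rw [Category.assoc, hg, Abelian.image.fac]

end Aux

set_option maxHeartbeats 1000000 in
set_option synthInstance.maxHeartbeats 400000 in
theorem statement2
    -- `A` is Grothendieck abelian:
    [HasColimits A] [AB5 A] [HasSeparator A]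
    -- the localization functor `T` and the section functor `S`:
    (T : A ⥤ Q) (S : Q ⥤ A) (adj : T ⊣ S)
    [T.Additive] [PreservesFiniteLimits T] [IsIso adj.counit]
    -- property (Inj): injective objects of `B` remain injective in `A`:
    (hInj : ∀ J : ObjectProperty.FullSubcategory (memB T), Injective J → Injective J.obj)
    -- the torsion functor `Γ`:
    (Γ : A ⥤ A) (ε : Γ ⟶ 𝟭 A) (hΓ : IsTorsionFunctor T Γ ε)
    -- an injective object of `A`:
    (I : A) (hI : Injective I) :
    -- `0 → Γ(I) → I → Σ(I) → 0` is short exact: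
    (∃ w : ε.app I ≫ adj.unit.app I = 0,
      (ShortComplex.mk (ε.app I) (adj.unit.app I) w).ShortExact) ∧
    -- `Γ(I)` and `Σ(I) = S(T(I))` are injective in `A`:
    Injective (Γ.obj I) ∧ Injective ((T ⋙ S).obj I) ∧
    -- `T(I)` is injective in `A/B`:
    Injective (T.obj I) := by
  haveI := hI
  haveI : Injective ((𝟭 A).obj I) := hI
  haveI : PreservesColimits T := adj.leftAdjoint_preservesColimits
  haveI : PreservesLimits S := adj.rightAdjoint_preservesLimits
  haveI : Mono (ε.app I) := hΓ.mono I
  -- the composite `Γ(I) → I → Σ(I)` vanishes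
  have w : ε.app I ≫ adj.unit.app I = 0 :=
    hom_to_S_eq_zero adj (hΓ.mem I) _
  -- `Γ(I)` is injective
  have hΓI : Injective (Γ.obj I) := by
    apply hInj ⟨Γ.obj I, hΓ.mem I⟩
    constructor
    intro X Y g f hf
    -- `f` is a monomorphism in `A`
    have hfA : Mono (f.hom) := by
      apply Abelian.mono_of_kernel_ι_eq_zero
      have hker : memB T (kernel (f.hom)) :=
        memB_of_mono_s2 T (kernel.ι _) X.property
      exact congrArg (fun φ => φ.hom) (hf.right_cancellation
        (Z := (⟨kernel (f.hom), hker⟩ : ObjectProperty.FullSubcategory (memB T)))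
        (ObjectProperty.homMk (kernel.ι _)) 0 (by
          ext
          simp [kernel.condition]))
    haveI := hfA
    let h0 : Y.obj ⟶ I :=
      Injective.factorThru ((g.hom) ≫ ε.app I)
        (f.hom)
    obtain ⟨h1, hh1⟩ := factor_thru_torsion T hΓ h0 Y.property
    refine ⟨ObjectProperty.homMk h1, ?_⟩
    ext
    show (f.hom) ≫ h1 = (g.hom)
    rw [← cancel_mono (ε.app I), Category.assoc, hh1]
    exact Injective.comp_factorThru _ _
  haveI := hΓI
  -- split off the torsion part
  let εI : Γ.obj I ⟶ I := ε.app I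
  haveI : Mono εI := hΓ.mono I
  let r : I ⟶ Γ.obj I := Injective.factorThru (𝟙 (Γ.obj I)) εI
  have hr : εI ≫ r = 𝟙 (Γ.obj I) := Injective.comp_factorThru _ _
  let K : A := cokernel εI
  let π : I ⟶ K := cokernel.π εI
  let p : I ⟶ I := 𝟙 I - r ≫ εI
  have hεp : εI ≫ p = 0 := by
    simp only [p, Preadditive.comp_sub, Category.comp_id, ← Category.assoc, hr,
      Category.id_comp, sub_self]
  let s : K ⟶ I := cokernel.desc εI p hεp
  have hπs : π ≫ s = p := cokernel.π_desc _ _ _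
  have hsπ : s ≫ π = 𝟙 K := by
    rw [← cancel_epi π, ← Category.assoc, hπs, Category.comp_id]
    simp only [p, Preadditive.sub_comp, Category.id_comp, Category.assoc,
      cokernel.condition, comp_zero, sub_zero, π]
  haveI : IsSplitMono s := IsSplitMono.mk' ⟨π, hsπ⟩
  -- `K` is injective
  have hK : Injective K := by
    constructor
    intro X Y g f hf
    haveI := hf
    refine ⟨Injective.factorThru (g ≫ s) f ≫ π, ?_⟩
    rw [← Category.assoc, Injective.comp_factorThru, Category.assoc, hsπ, Category.comp_id]
  haveI := hK
  -- `K` has no nonzero subobject in `B`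
  have hKsub : ∀ (N : A) (n : N ⟶ K), Mono n → memB T N → n = 0 := by
    intro N n hn hN
    haveI := hn
    obtain ⟨g, hg⟩ := hΓ.isMax I N (n ≫ s) inferInstance hN
    have hg' : g ≫ εI = n ≫ s := hg
    have : n ≫ s ≫ π = (g ≫ εI) ≫ π := by rw [← Category.assoc, hg']
    rw [hsπ, Category.comp_id, Category.assoc, cokernel.condition, comp_zero] at this
    exact this
  -- `T` inverts every unit map
  have hTu : ∀ X : A, IsIso (T.map (adj.unit.app X)) := by
    intro X
    have h := adj.left_triangle_components X
    haveI : IsIso (T.map (adj.unit.app X) ≫ adj.counit.app (T.obj X)) := by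
      rw [h]; exact ⟨𝟙 _, by simp, by simp⟩
    exact IsIso.of_isIso_comp_right _ (adj.counit.app (T.obj X))
  -- retyped unit maps
  let uI : I ⟶ S.obj (T.obj I) := adj.unit.app I
  let uK : K ⟶ S.obj (T.obj K) := adj.unit.app K
  haveI hTuK : IsIso (T.map uK) := hTu K
  -- the unit of `K` is a monomorphism
  haveI huKmono : Mono uK := by
    apply Abelian.mono_of_kernel_ι_eq_zero
    apply hKsub
    · infer_instance
    · exact IsZero.of_iso
        (IsZero.of_iso (isZero_zero Q) (kernel.ofMono (T.map uK)))
        (PreservesKernel.iso T uK)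
  -- the unit of `K` is an isomorphism
  haveI huK : IsIso uK := by
    let t : S.obj (T.obj K) ⟶ K := Injective.factorThru (𝟙 K) uK
    have ht : uK ≫ t = 𝟙 K := Injective.comp_factorThru _ _
    let p2 : S.obj (T.obj K) ⟶ S.obj (T.obj K) := 𝟙 _ - t ≫ uK
    have hup2 : uK ≫ p2 = 0 := by
      simp only [p2, Preadditive.comp_sub, Category.comp_id, ← Category.assoc, ht,
        Category.id_comp, sub_self]
    have hD : memB T (cokernel uK) :=
      IsZero.of_iso
        (IsZero.of_iso (isZero_zero Q) (cokernel.ofEpi (T.map uK)))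
        (PreservesCokernel.iso T uK)
    have hs2 : cokernel.desc uK p2 hup2 = 0 :=
      hom_to_S_eq_zero adj hD _
    have hp2 : p2 = 0 := by
      rw [← cokernel.π_desc uK p2 hup2, hs2, comp_zero]
    have htu : t ≫ uK = 𝟙 _ := (sub_eq_zero.mp hp2).symm
    exact ⟨t, ht, htu⟩
  -- `T(π)` is an isomorphism
  have hTε : T.map εI = 0 := IsZero.eq_of_src (hΓ.mem I) _ _
  haveI hTπ : IsIso (T.map π) := by
    refine ⟨T.map s, ?_, ?_⟩
    · rw [← T.map_comp, hπs]
      show T.map p = 𝟙 _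
      have h2 : T.map p = T.map (𝟙 I) - T.map (r ≫ εI) := T.map_sub
      rw [h2, T.map_comp, hTε, comp_zero, sub_zero, T.map_id]
    · rw [← T.map_comp, hsπ, T.map_id]
  haveI : IsIso (S.map (T.map π)) := inferInstance
  -- naturality of the unit
  have hnat : uI ≫ S.map (T.map π) = π ≫ uK := by
    have h := adj.unit.naturality π
    simp only [Functor.id_map, Functor.comp_map] at h
    exact h.symm
  -- the splitting of the short complex
  let SC := ShortComplex.mk (ε.app I) (adj.unit.app I) w
  let sp : SC.Splitting :=
    { r := r
      s := S.map (T.map π) ≫ inv uK ≫ s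
      f_r := hr
      s_g := by
        show (S.map (T.map π) ≫ inv uK ≫ s) ≫ uI = 𝟙 _
        rw [← cancel_mono (S.map (T.map π))]
        simp only [Category.assoc, hnat, Category.id_comp]
        rw [reassoc_of% hsπ]
        simp
      id := by
        show r ≫ εI + uI ≫ S.map (T.map π) ≫ inv uK ≫ s = 𝟙 I
        rw [reassoc_of% hnat, IsIso.hom_inv_id_assoc, hπs]
        simp [p] }
  -- `Σ(I)` is injective
  have hSig : Injective ((T ⋙ S).obj I) := by
    refine Injective.of_iso ?_ hK
    exact (asIso uK) ≪≫ (asIso (S.map (T.map π))).symm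
  haveI : Injective (S.obj (T.obj I)) := hSig
  -- `T(I)` is injective
  have hTI : Injective (T.obj I) := by
    constructor
    intro X Y g f hf
    haveI := hf
    haveI : Mono (S.map f) := inferInstance
    let h : S.obj Y ⟶ S.obj (T.obj I) :=
      Injective.factorThru (S.map g) (S.map f)
    have hh : S.map f ≫ h = S.map g := Injective.comp_factorThru _ _
    refine ⟨inv (adj.counit.app Y) ≫ T.map h ≫ adj.counit.app (T.obj I), ?_⟩
    have c1 : f ≫ inv (adj.counit.app Y) = inv (adj.counit.app X) ≫ T.map (S.map f) := by
      rw [IsIso.comp_inv_eq, Category.assoc, IsIso.eq_inv_comp]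
      have hc := adj.counit.naturality f
      simp only [Functor.comp_map, Functor.id_map] at hc
      exact hc.symm
    have c2 : T.map (S.map g) ≫ adj.counit.app (T.obj I) = adj.counit.app X ≫ g := by
      have hc := adj.counit.naturality g
      simp only [Functor.comp_map, Functor.id_map] at hc
      exact hc
    rw [← Category.assoc, c1, Category.assoc, ← T.map_comp_assoc, hh, c2,
      IsIso.inv_hom_id_assoc]
  exact ⟨⟨w, sp.shortExact⟩, hΓI, hSig, hTI⟩
end

section
/- Let A be a Grothendieck abelian category and B a localizing subcategory satisfying (Inj). Then the functors T and S restrict to mutually quasi-inverse equivalences between the full subcategory of A consisting of torsion-free injective objects (injective objects I with Γ(I) = 0) and the full subcategory of injective objects of A/B. -/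
/-!
STATEMENT 3. Let `A` be a Grothendieck abelian category and `B` a localizing
subcategory satisfying (Inj).  Then the functors `T` and `S` restrict to
mutually quasi-inverse equivalences between the full subcategory of `A`
consisting of torsion-free injective objects (injectives `I` with `Γ(I) = 0`)
and the full subcategory of injective objects of `A/B`.

Encoding: `B = ker T` for an exact localization functor `T : A ⥤ Q` with fully
faithful right adjoint (section functor) `S` (so the counit `T ∘ S ⟶ 𝟭` is an
isomorphism); the torsion functor `Γ` is characterized by `IsTorsionFunctor`.
The conclusion asserts: `T` sends torsion-free injectives of `A` to injectives
of `A/B`, `S` sends injectives of `A/B` to torsion-free injectives of `A`, and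
the unit `I → S(T(I))` is an isomorphism on torsion-free injectives (together
with the counit isomorphism this makes the restricted functors mutually
quasi-inverse equivalences).
-/

open CategoryTheory Limits

universe v u u'

variable {A : Type u} [Category.{v} A] [Abelian A]
variable {Q : Type u'} [Category.{v} Q] [Abelian Q]

/-- Key lemma: a map into an object in the image of `S` whose image under `T`
vanishes is itself zero. -/
lemma aux_zero_of_Tmap_zero (T : A ⥤ Q) (S : Q ⥤ A) (adj : T ⊣ S) [T.Additive]
    {X : A} {J : Q} (v : X ⟶ S.obj J) (h : T.map v = 0) : v = 0 := by
  apply (adj.homEquiv X J).symm.injective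
  simp [adj.homEquiv_counit, h]

theorem statement3
    -- `A` is Grothendieck abelian:
    [HasColimits A] [AB5 A] [HasSeparator A]
    -- the localization functor `T` and the section functor `S`:
    (T : A ⥤ Q) (S : Q ⥤ A) (adj : T ⊣ S)
    [T.Additive] [PreservesFiniteLimits T] [IsIso adj.counit]
    -- property (Inj): injective objects of `B` remain injective in `A`:
    (hInj : ∀ J : ObjectProperty.FullSubcategory (memB T), Injective J → Injective J.obj)
    -- the torsion functor `Γ`:
    (Γ : A ⥤ A) (ε : Γ ⟶ 𝟭 A) (hΓ : IsTorsionFunctor T Γ ε) :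
    -- `T` maps torsion-free injectives of `A` to injectives of `A/B`,
    -- and the unit is an isomorphism there (so `S ∘ T ≅ 𝟭` on this subcategory):
    (∀ I : A, Injective I → IsZero (Γ.obj I) →
      Injective (T.obj I) ∧ IsIso (adj.unit.app I)) ∧
    -- `S` maps injectives of `A/B` to torsion-free injectives of `A`
    -- (and `T ∘ S ≅ 𝟭` by the counit isomorphism):
    (∀ J : Q, Injective J →
      Injective (S.obj J) ∧ IsZero (Γ.obj (S.obj J))) := by
  have hSlim : PreservesLimits S := adj.rightAdjoint_preservesLimits
  -- Γ(S J) = 0 for every J : the inclusion ε has T.map ε = 0 hence is zero, and is mono.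
  have hGamma : ∀ J : Q, IsZero (Γ.obj (S.obj J)) := by
    intro J
    have hmono := hΓ.mono (S.obj J)
    have hz : ε.app (S.obj J) = 0 := by
      apply aux_zero_of_Tmap_zero T S adj
      exact (hΓ.mem (S.obj J)).eq_of_src _ _
    rw [IsZero.iff_id_eq_zero]
    rw [← cancel_mono (ε.app (S.obj J)), hz, comp_zero, comp_zero]
  constructor
  · intro I hI hΓI
    -- T.map (unit) is an iso
    have htri : T.map (adj.unit.app I) ≫ adj.counit.app (T.obj I) = 𝟙 (T.obj I) :=
      adj.left_triangle_components I
    have hcu : IsIso (adj.counit.app (T.obj I)) := inferInstance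
    have hTu : IsIso (T.map (adj.unit.app I)) := by
      have h2 : T.map (adj.unit.app I) = 𝟙 (T.obj I) ≫ inv (adj.counit.app (T.obj I)) := by
        rw [IsIso.eq_comp_inv]; exact htri
      rw [Category.id_comp] at h2
      rw [h2]; infer_instance
    -- unit is mono: its kernel is torsion and embeds in torsion-free I
    have hmonoU : Mono (adj.unit.app I) := by
      apply Abelian.mono_of_kernel_ι_eq_zero
      have h1 : T.map (kernel.ι (adj.unit.app I)) = 0 := by
        rw [← cancel_mono (T.map (adj.unit.app I)), ← T.map_comp, kernel.condition,
          T.map_zero, zero_comp]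
      have h2 : memB T (kernel (adj.unit.app I)) := by
        rw [memB, IsZero.iff_id_eq_zero, ← cancel_mono (T.map (kernel.ι (adj.unit.app I))),
          h1, comp_zero, comp_zero]
      obtain ⟨g, hg⟩ := hΓ.isMax I _ (kernel.ι (adj.unit.app I)) inferInstance h2
      rw [← hg, hΓI.eq_of_tgt g 0, zero_comp]
    -- split mono, and the retraction is a two-sided inverse
    have hsplit : adj.unit.app I ≫ Injective.factorThru (𝟙 I) (adj.unit.app I) = 𝟙 I :=
      Injective.comp_factorThru (𝟙 I) (adj.unit.app I)
    set r := Injective.factorThru (𝟙 I) (adj.unit.app I) with hr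
    have hTr : T.map r ≫ T.map (adj.unit.app I) = 𝟙 _ := by
      have h1 : T.map (adj.unit.app I) ≫ T.map r = 𝟙 _ := by
        rw [← T.map_comp, hsplit]; simp
      calc T.map r ≫ T.map (adj.unit.app I)
          = inv (T.map (adj.unit.app I)) ≫ (T.map (adj.unit.app I) ≫ T.map r) ≫
              T.map (adj.unit.app I) := by simp
        _ = 𝟙 _ := by rw [h1]; simp
    have hsec : r ≫ adj.unit.app I = 𝟙 _ := by
      have : (r ≫ adj.unit.app I - 𝟙 _ : S.obj (T.obj I) ⟶ S.obj (T.obj I)) = 0 := by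
        apply aux_zero_of_Tmap_zero T S adj
        rw [T.map_sub, T.map_comp, hTr]; simp
      have := sub_eq_zero.mp this
      exact this
    have hIsoU : IsIso (adj.unit.app I) := ⟨r, hsplit, hsec⟩
    refine ⟨?_, hIsoU⟩
    -- T I is injective
    constructor
    intro X Y g f hf
    have hSf : Mono (S.map f) := inferInstance
    haveI : Injective ((𝟭 A).obj I) := hI
    have hg' : S.map f ≫ Injective.factorThru (S.map g ≫ inv (adj.unit.app I)) (S.map f)
        = S.map g ≫ inv (adj.unit.app I) := Injective.comp_factorThru _ _
    set h := Injective.factorThru (S.map g ≫ inv (adj.unit.app I)) (S.map f) with hh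
    refine ⟨inv (adj.counit.app Y) ≫ T.map (h ≫ adj.unit.app I) ≫ adj.counit.app (T.obj I), ?_⟩
    have hnat : f ≫ inv (adj.counit.app Y) = inv (adj.counit.app X) ≫ T.map (S.map f) := by
      rw [IsIso.eq_inv_comp, ← Category.assoc, IsIso.comp_inv_eq]
      exact (adj.counit.naturality f).symm
    have heq : S.map f ≫ h ≫ adj.unit.app I = S.map g := by
      rw [← Category.assoc, hg', Category.assoc, IsIso.inv_hom_id, Category.comp_id]
    rw [← Category.assoc, hnat]
    simp only [Category.assoc]
    rw [← Category.assoc (T.map (S.map f)), ← T.map_comp, heq, adj.counit_naturality g,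
      ← Category.assoc, IsIso.inv_hom_id, Category.id_comp]
  · intro J hJ
    exact ⟨Injective.injective_of_adjoint adj J, hGamma J⟩
end

section
/- Let A be a Grothendieck abelian category and B a localizing subcategory satisfying (Inj). For every object N of A/B, the counit T(S(N)) → N is an isomorphism, and for every i > 0 the higher derived section R^iS(N) belongs to B (equivalently, T(R^iS(N)) = 0). -/
/-!
STATEMENT 7. Let `A` be a Grothendieck abelian category and `B` a localizing
subcategory satisfying (Inj).  For every object `N` of `A/B`, the counit
`T(S(N)) → N` is an isomorphism, and for every `i > 0` the higher derived
section `R^iS(N)` belongs to `B` (equivalently `T(R^iS(N)) = 0`).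

Encoding: `B = ker T` where `T : A ⥤ Q` is an exact functor with right adjoint
`S` (the section functor) which exhibits `Q` as the localization (Serre
quotient) of `A` at the class of morphisms whose kernel and cokernel lie in
`B`.  (Here we do *not* assume that the counit is an isomorphism: this is part
of the conclusion.)
-/

open CategoryTheory Limits

universe v u u'

variable {A : Type u} [Category.{v} A] [Abelian A]
variable {Q : Type u'} [Category.{v} Q] [Abelian Q]

/-- The class of morphisms of `A` whose kernel and cokernel lie in `B = ker T`;
the Serre quotient `A/B` is the localization of `A` at this class. -/
def serreW (T : A ⥤ Q) : MorphismProperty A :=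
  fun _ _ f => IsZero (T.obj (kernel f)) ∧ IsZero (T.obj (cokernel f))

/-- Gabriel–Zisman: the counit of `T ⊣ S` is an isomorphism when `T` is a localization. -/
lemma counit_isIso_of_isLocalization (T : A ⥤ Q) (S : Q ⥤ A) (adj : T ⊣ S)
    [T.IsLocalization (serreW T)] (M : Q) : IsIso (adj.counit.app M) := by
  let τ : T ⟶ T ⋙ (S ⋙ T) :=
    { app := fun X => T.map (adj.unit.app X)
      naturality := fun X Y f => by
        dsimp
        rw [← T.map_comp, ← T.map_comp, Adjunction.unit_naturality] }
  let θ : 𝟭 Q ⟶ S ⋙ T :=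
    Localization.liftNatTrans T (serreW T) T (T ⋙ (S ⋙ T)) (𝟭 Q) (S ⋙ T) τ
  have hθ : ∀ X : A, θ.app (T.obj X) = T.map (adj.unit.app X) := by
    intro X
    simp [θ, τ, Localization.liftNatTrans_app, Localization.Lifting.iso, Localization.Lifting.id]
  have h1 : θ ≫ Functor.whiskerLeft S (𝟙 T) ≫ adj.counit = 𝟙 (𝟭 Q) := by
    apply Localization.natTrans_ext T (serreW T)
    intro X
    simp [hθ X]
  have h1' : θ.app M ≫ adj.counit.app M = 𝟙 M := by
    have := congr_arg (fun (α : 𝟭 Q ⟶ 𝟭 Q) => α.app M) h1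
    simpa using this
  have h2 : adj.counit.app M ≫ θ.app M = 𝟙 _ := by
    have hnat := θ.naturality (adj.counit.app M)
    dsimp at hnat
    rw [hnat, hθ (S.obj M), ← T.map_comp, adj.right_triangle_components]
    simp
  exact ⟨θ.app M, h2, h1'⟩

theorem statement7
    -- `A` and `A/B` are Grothendieck abelian (so they have enough injectives):
    [HasColimits A] [AB5 A] [HasSeparator A]
    [HasColimits Q] [AB5 Q] [HasSeparator Q] [EnoughInjectives Q]
    -- `T` is the (exact) localization functor of `A` along `B`
    -- and `S` is its section functor:
    (T : A ⥤ Q) (S : Q ⥤ A) (adj : T ⊣ S)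
    [T.Additive] [S.Additive] [PreservesFiniteLimits T]
    [T.IsLocalization (serreW T)]
    -- property (Inj): injective objects of `B` remain injective in `A`:
    (hInj : ∀ J : ObjectProperty.FullSubcategory (memB T), Injective J → Injective J.obj)
    (N : Q) :
    -- the counit `T(S(N)) → N` is an isomorphism:
    IsIso (adj.counit.app N) ∧
    -- and `R^iS(N)` belongs to `B` for `i > 0`:
    (∀ i : ℕ, 0 < i → IsZero (T.obj ((S.rightDerived i).obj N))) := by
  have hcounit : ∀ M : Q, IsIso (adj.counit.app M) :=
    counit_isIso_of_isLocalization T S adj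
  haveI : ∀ M : Q, IsIso (adj.counit.app M) := hcounit
  haveI : IsIso adj.counit := NatIso.isIso_of_isIso_app _
  haveI : PreservesColimitsOfSize.{0, 0} T := adj.leftAdjoint_preservesColimits
  refine ⟨hcounit N, fun i hi => ?_⟩
  obtain ⟨n, rfl⟩ : ∃ n, i = n + 1 := ⟨i - 1, (Nat.succ_pred_eq_of_pos hi).symm⟩
  let I := InjectiveResolution.of N
  let K := (S.mapHomologicalComplex (ComplexShape.up ℕ)).obj I.cocomplex
  let e : S ⋙ T ≅ 𝟭 Q := asIso adj.counit
  -- exactness of the injective resolution in positive degrees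
  have hex : (I.cocomplex.sc (n + 1)).Exact := by
    rw [← HomologicalComplex.exactAt_iff]
    have : QuasiIsoAt I.ι (n + 1) := inferInstance
    exact (quasiIsoAt_iff_exactAt I.ι (n + 1)
      (CochainComplex.exactAt_succ_single_obj N n)).1 this
  -- the short complex of `T(S(I))` at `n+1` is isomorphic to that of `I`
  let φ : (K.sc (n + 1)).map T ≅ I.cocomplex.sc (n + 1) :=
    ShortComplex.isoMk (e.app _) (e.app _) (e.app _)
      (by simp [K]; exact (e.hom.naturality (I.cocomplex.d _ _)).symm)
      (by simp [K]; exact (e.hom.naturality (I.cocomplex.d _ _)).symm)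
  have hex2 : ((K.sc (n + 1)).map T).Exact := ShortComplex.exact_of_iso φ.symm hex
  have hz : IsZero (((K.sc (n + 1)).map T).homology) :=
    (ShortComplex.exact_iff_isZero_homology _).1 hex2
  exact hz.of_iso
    ((T.mapIso (I.isoRightDerivedObj S (n + 1))) ≪≫
      (ShortComplex.mapHomologyIso (K.sc (n + 1)) T).symm)
end

section
/- Let A be a Grothendieck abelian category and let B ⊆ B′ ⊆ A be localizing subcategories, each satisfying (Inj) in A. Let T : A → A/B and S : A/B → A be the localization and section functors for B, and let T′ : B′ → B′/B and S′ : B′/B → B′ be the localization and section functors for B as a localizing subcategory of B′. Then: (a) for every object M of B′/B, viewed inside A/B, the object S(M) belongs to B′ and S′(M) ≅ S(M), i.e. S′ coincides with the restriction of S to B′/B; (b) every injective object of B′/B remains injective as an object of A/B. -/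
/-!
STATEMENT 8. Let `A` be a Grothendieck abelian category and `B ⊆ B′ ⊆ A`
localizing subcategories, each satisfying (Inj) in `A`.  Let `T : A → A/B` and
`S : A/B → A` be the localization and section functors for `B`, and let
`T′ : B′ → B′/B` and `S′ : B′/B → B′` be the localization and section functors
for `B` viewed inside `B′`.  Then:
(a) for every object `M` of `B′/B`, viewed inside `A/B`, the object `S(M)`
belongs to `B′` and `S′(M) ≅ S(M)`;
(b) every injective object of `B′/B` remains injective as an object of `A/B`.

Encoding: `B = ker T` for an exact localization functor `T : A ⥤ Q` with fully
faithful right adjoint (section functor) `S`; the larger localizing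
subcategory `B′` is given by a predicate `memB'` (with the closure properties
of a localizing subcategory) containing `B`.  The subcategory `B′/B` of
`Q = A/B` is the full subcategory of objects isomorphic to `T(M)` with
`M ∈ B′`, and `T′` is the restriction of `T`; statement (a) is expressed for
an arbitrary right adjoint `S′` of `T′` (the section functor being unique with
this property).
-/

open CategoryTheory Limits

universe v u u'

variable {A : Type u} [Category.{v} A] [Abelian A]
variable {Q : Type u'} [Category.{v} Q] [Abelian Q]

/-- `P` cuts out a localizing subcategory: it is closed under isomorphisms,
contains the zero objects, and is closed under subobjects, quotients,
extensions and coproducts. -/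
structure IsLocalizingPred {C : Type*} [Category C] [Abelian C] [HasColimits C]
    (P : C → Prop) : Prop where
  of_iso : ∀ {X Y : C}, (X ≅ Y) → P X → P Y
  of_zero : ∀ X : C, IsZero X → P X
  of_mono : ∀ {X Y : C} (f : X ⟶ Y), Mono f → P Y → P X
  of_epi : ∀ {X Y : C} (f : X ⟶ Y), Epi f → P X → P Y
  of_extension : ∀ E : ShortComplex C, E.ShortExact → P E.X₁ → P E.X₃ → P E.X₂
  of_coprod : ∀ {ι : Type v} (f : ι → C), (∀ i, P (f i)) → P (∐ f)

/-- The full subcategory `B′/B` of `Q = A/B`: objects isomorphic to `T(M)` for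
some `M ∈ B′`. -/
def memQuot (T : A ⥤ Q) (memB' : A → Prop) (X : Q) : Prop :=
  ∃ M : A, memB' M ∧ Nonempty (T.obj M ≅ X)

/-- The restriction `T′ : B′ → B′/B` of the localization functor `T`. -/
def Tres (T : A ⥤ Q) (memB' : A → Prop) :
    ObjectProperty.FullSubcategory memB' ⥤ ObjectProperty.FullSubcategory (memQuot T memB') :=
  ObjectProperty.lift _ (ObjectProperty.ι memB' ⋙ T)
    (fun M => ⟨M.obj, M.property, ⟨Iso.refl _⟩⟩)


section Aux

variable [HasColimits A]
variable (T : A ⥤ Q) (S : Q ⥤ A) (adj : T ⊣ S)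
variable [T.Additive] [PreservesFiniteLimits T] [IsIso adj.counit]
variable (memB' : A → Prop) (hB' : IsLocalizingPred memB')
variable (hBB' : ∀ N : A, memB T N → memB' N)

include adj hB' hBB' in
theorem aux_memB'_S {X : Q} (hX : memQuot T memB' X) : memB' (S.obj X) := by
  obtain ⟨M, hM, ⟨e⟩⟩ := hX
  set η := adj.unit.app M with hη
  have htri : T.map η ≫ adj.counit.app (T.obj M) = 𝟙 _ := adj.left_triangle_components M
  haveI : IsIso (T.map η) := IsIso.of_isIso_fac_right htri
  haveI : PreservesColimitsOfSize.{0, 0} T := adj.leftAdjoint_preservesColimits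
  have hcoker : memB T (cokernel η) :=
    IsZero.of_iso (isZero_zero Q) (PreservesCokernel.iso T η ≪≫ cokernel.ofEpi (T.map η))
  have him : memB' (image η) := hB'.of_epi (factorThruImage η) inferInstance hM
  have hk : memB' (kernel (cokernel.π η)) := hB'.of_iso (Abelian.imageIsoImage η).symm him
  have hSTM : memB' (S.obj (T.obj M)) := by
    refine hB'.of_extension
      (ShortComplex.mk (kernel.ι (cokernel.π η)) (cokernel.π η) (kernel.condition _))
      ?_ hk (hBB' _ hcoker)
    exact { exact := ShortComplex.exact_of_f_is_kernel _ (kernelIsKernel _) }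
  exact hB'.of_iso (S.mapIso e) hSTM

/-- The restriction of the section functor `S` to `B′/B`, landing in `B′`. -/
noncomputable def Sres : ObjectProperty.FullSubcategory (memQuot T memB') ⥤ ObjectProperty.FullSubcategory memB' :=
  ObjectProperty.lift _ (ObjectProperty.ι (memQuot T memB') ⋙ S)
    (fun X => aux_memB'_S T S adj memB' hB' hBB' X.property)

/-- The restricted adjunction `T′ ⊣ S′`. -/
noncomputable def adjres : Tres T memB' ⊣ Sres T S adj memB' hB' hBB' :=
  Adjunction.mkOfHomEquiv
    { homEquiv := fun N X =>
        { toFun := fun f => ObjectProperty.homMk (adj.homEquiv N.obj X.obj f.hom)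
          invFun := fun g => ObjectProperty.homMk ((adj.homEquiv N.obj X.obj).symm g.hom)
          left_inv := fun f => InducedCategory.hom_ext ((adj.homEquiv N.obj X.obj).left_inv f.hom)
          right_inv := fun g => InducedCategory.hom_ext ((adj.homEquiv N.obj X.obj).right_inv g.hom) }
      homEquiv_naturality_left_symm := fun f g =>
        InducedCategory.hom_ext (adj.homEquiv_naturality_left_symm f.hom g.hom)
      homEquiv_naturality_right := fun f g =>
        InducedCategory.hom_ext (adj.homEquiv_naturality_right f.hom g.hom) }

include hB' in
theorem tres_preservesMono : (Tres T memB').PreservesMonomorphisms := by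
  constructor
  intro N₁ N₂ g hg
  let g' : N₁.obj ⟶ N₂.obj := g.hom
  have hz : kernel.ι g' = 0 := by
    have hK : memB' (kernel g') := hB'.of_mono (kernel.ι g') inferInstance N₁.property
    have heq : (show (⟨kernel g', hK⟩ : ObjectProperty.FullSubcategory memB') ⟶ N₁ from ObjectProperty.homMk (kernel.ι g')) ≫ g =
        (show (⟨kernel g', hK⟩ : ObjectProperty.FullSubcategory memB') ⟶ N₁ from
          ObjectProperty.homMk (0 : kernel g' ⟶ N₁.obj)) ≫ g := by
      ext
      simp [g']
    exact congrArg InducedCategory.Hom.hom ((cancel_mono g).mp heq)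
  haveI hmonoA : Mono g' := Abelian.mono_of_kernel_ι_eq_zero _ hz
  haveI : Mono (T.map g') := T.map_mono _
  constructor
  intro Z a b h
  exact InducedCategory.hom_ext ((cancel_mono (T.map g')).mp (congrArg InducedCategory.Hom.hom h))

end Aux

theorem statement8
    -- `A` is Grothendieck abelian:
    [HasColimits A] [AB5 A] [HasSeparator A]
    -- the localization functor `T` and the section functor `S` for `B`:
    (T : A ⥤ Q) (S : Q ⥤ A) (adj : T ⊣ S)
    [T.Additive] [PreservesFiniteLimits T] [IsIso adj.counit]
    -- `B′` is a localizing subcategory of `A` containing `B`: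
    (memB' : A → Prop) (hB' : IsLocalizingPred memB')
    (hBB' : ∀ N : A, memB T N → memB' N)
    -- property (Inj) for `B` in `A`:
    (hInjB : ∀ J : ObjectProperty.FullSubcategory (memB T), Injective J → Injective J.obj)
    -- property (Inj) for `B′` in `A`:
    (hInjB' : ∀ J : ObjectProperty.FullSubcategory memB', Injective J → Injective J.obj) :
    -- (a) the section functor `S` carries `B′/B` into `B′` ...
    (∀ X : ObjectProperty.FullSubcategory (memQuot T memB'), memB' (S.obj X.obj)) ∧
    -- ... and any section functor `S′` for `T′ : B′ → B′/B` agrees with `S`: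
    (∀ (S' : ObjectProperty.FullSubcategory (memQuot T memB') ⥤ ObjectProperty.FullSubcategory memB')
        (_ : Tres T memB' ⊣ S') (X : ObjectProperty.FullSubcategory (memQuot T memB')),
        Nonempty ((S'.obj X).obj ≅ S.obj X.obj)) ∧
    -- (b) injective objects of `B′/B` remain injective in `A/B`:
    (∀ J : ObjectProperty.FullSubcategory (memQuot T memB'), Injective J → Injective J.obj) := by
  refine ⟨fun X => aux_memB'_S T S adj memB' hB' hBB' X.property, ?_, ?_⟩
  · intro S' adjS' X
    exact ⟨(ObjectProperty.ι memB').mapIso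
      ((Adjunction.rightAdjointUniq adjS' (adjres T S adj memB' hB' hBB')).app X)⟩
  · intro J hJ
    haveI := hJ
    haveI : (Tres T memB').PreservesMonomorphisms := tres_preservesMono T memB' hB'
    have hinj : Injective ((Sres T S adj memB' hB' hBB').obj J) :=
      Injective.injective_of_adjoint (adjres T S adj memB' hB' hBB') J
    have hSJ : Injective (S.obj J.obj) := hInjB' _ hinj
    constructor
    intro X Y f g hg
    haveI := hg
    haveI : PreservesLimitsOfSize.{0, 0} S := adj.rightAdjoint_preservesLimits
    haveI : Mono (S.map g) := S.map_mono g
    obtain ⟨h, hh⟩ := hSJ.factors (S.map f) (S.map g)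
    refine ⟨inv (adj.counit.app Y) ≫ T.map h ≫ adj.counit.app J.obj, ?_⟩
    rw [← cancel_epi (adj.counit.app X)]
    have nat1 := adj.counit.naturality g
    have nat2 := adj.counit.naturality f
    dsimp at nat1 nat2 ⊢
    rw [← Category.assoc, ← nat1]
    simp only [Category.assoc, IsIso.hom_inv_id_assoc]
    rw [← Functor.map_comp_assoc, hh]
    exact nat2
end
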